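/- Lower bound: Every feasible schedule (W,A,μ) has length c(A,μ) ≥ MST/2 and number of vehicles |W_0| ≥ (MST/2 + n·δ)/Δ. -/

import Mathlib

open Relation

section ChainSum

variable {M : Type*} [MetricSpace M]

noncomputable def chainSum {M : Type*} [MetricSpace M] : List M → ℝ
  | [] => 0
  | [_] => 0
  | a :: b :: t => dist a b + chainSum (b :: t)

@[simp] lemma chainSum_nil : chainSum ([] : List M) = 0 := rfl
@[simp] lemma chainSum_single (a : M) : chainSum [a] = 0 := rfl
@[simp] lemma chainSum_cons_cons (a b : M) (t : List M) :
    chainSum (a :: b :: t) = dist a b + chainSum (b :: t) := rfl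

lemma chainSum_nonneg (l : List M) : 0 ≤ chainSum l := by
  match l with
  | [] => simp
  | [a] => simp
  | a :: b :: t =>
    have := chainSum_nonneg (b :: t)
    simp only [chainSum_cons_cons]
    positivity

lemma chainSum_cons_le (a : M) (l : List M) : chainSum l ≤ chainSum (a :: l) := by
  match l with
  | [] => simp
  | b :: t => simp [dist_nonneg]

lemma chainSum_cons_cons_le (a b : M) (l : List M) :
    chainSum (a :: l) ≤ dist a b + chainSum (b :: l) := by
  match l with
  | [] => simp [dist_nonneg]
  | c :: t =>
    simp only [chainSum_cons_cons, ← add_assoc]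
    have := dist_triangle a b c
    linarith

lemma chainSum_sublist {l₁ l₂ : List M} (h : l₁.Sublist l₂) :
    chainSum l₁ ≤ chainSum l₂ ∧ ∀ a : M, chainSum (a :: l₁) ≤ chainSum (a :: l₂) := by
  induction h with
  | slnil => exact ⟨le_refl _, fun a => le_refl _⟩
  | @cons l₁ l₂ b h ih =>
    refine ⟨ih.1.trans (chainSum_cons_le b l₂), fun a => (ih.2 a).trans ?_⟩
    calc chainSum (a :: l₂) ≤ dist a b + chainSum (b :: l₂) := chainSum_cons_cons_le a b l₂
    _ = chainSum (a :: b :: l₂) := (chainSum_cons_cons a b l₂).symm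
  | @cons_cons l₁ l₂ b h ih =>
    refine ⟨ih.2 b, fun a => ?_⟩
    simp only [chainSum_cons_cons]
    linarith [ih.2 b]

lemma chainSum_append (l₁ : List M) (h : l₁ ≠ []) (a : M) (l₂ : List M) :
    chainSum (l₁ ++ a :: l₂) = chainSum l₁ + dist (l₁.getLast h) a + chainSum (a :: l₂) := by
  match l₁ with
  | [b] => simp
  | b :: c :: t =>
    have H := chainSum_append (c :: t) (by simp) a l₂
    have hg : (b :: c :: t).getLast h = (c :: t).getLast (by simp) := List.getLast_cons _
    simp only [List.cons_append] at *
    rw [chainSum_cons_cons, H, hg, chainSum_cons_cons]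
    ring

lemma chainSum_cons_append (b : M) (L₁ : List M) (h : L₁ ≠ []) (L₂ : List M) (h₂ : L₂ ≠ []) :
    chainSum (b :: (L₁ ++ L₂)) = dist b (L₁.head h) + chainSum L₁
      + dist (L₁.getLast h) (L₂.head h₂) + chainSum L₂ := by
  match L₁, L₂ with
  | c :: t, d :: t₂ =>
    have : (c :: t) ++ (d :: t₂) = c :: (t ++ d :: t₂) := by simp
    rw [this, chainSum_cons_cons, List.head_cons, ← this,
      show (c :: t) ++ (d :: t₂) = (c :: t) ++ d :: t₂ from rfl,
      chainSum_append (c :: t) (by simp) d t₂, List.head_cons]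
    ring

lemma exists_walk {α : Type*} [DecidableEq α] (μ : α → M) :
    ∀ (n : ℕ) (U : Finset (α × α)) (root : α), U.card ≤ n →
    (∀ u : α, (u, root) ∉ U) →
    (∀ a ∈ U, ReflTransGen (fun u v => (u, v) ∈ U) root a.1) →
    (∀ u u' v : α, (u, v) ∈ U → (u', v) ∈ U → u = u') →
    ∃ (l : List α) (h : l ≠ []), l.head h = root ∧ l.getLast h = root ∧
      (∀ a ∈ U, a.1 ∈ l ∧ a.2 ∈ l) ∧
      chainSum (l.map μ) ≤ 2 * ∑ a ∈ U, dist (μ a.1) (μ a.2) := by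
  intro n
  induction n with
  | zero =>
    intro U root hcard _ _ _
    have : U = ∅ := Finset.card_eq_zero.mp (Nat.le_zero.mp hcard)
    subst this
    exact ⟨[root], by simp, rfl, rfl, by simp, by simp⟩
  | succ n ih =>
    intro U root hcard hroot hreach hindeg
    classical
    rcases eq_or_ne U ∅ with rfl | hne
    · exact ⟨[root], by simp, rfl, rfl, by simp, by simp⟩
    obtain ⟨a, ha⟩ := Finset.nonempty_iff_ne_empty.mpr hne
    set rU : α → α → Prop := fun u v => (u, v) ∈ U with hrU
    -- find an arc out of root
    have hrx : ∃ x, (root, x) ∈ U := by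
      rcases (hreach a ha).cases_head with h | ⟨c, hc, _⟩
      · exact ⟨a.2, by rwa [h]⟩
      · exact ⟨c, hc⟩
    obtain ⟨x, hx⟩ := hrx
    have hnr : ∀ y, ReflTransGen rU y root → y = root := by
      intro y hy
      rcases hy.cases_tail with h | ⟨c, _, hc⟩
      · exact h.symm
      · exact absurd hc (hroot c)
    have hxroot : x ≠ root := by
      rintro rfl; exact hroot x hx
    have hxnr : ¬ ReflTransGen rU x root := fun h => hxroot (hnr x h)
    set U₁ : Finset (α × α) := U.filter (fun b => ReflTransGen rU x b.1) with hU₁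
    set U₂ : Finset (α × α) := (U.filter (fun b => ¬ ReflTransGen rU x b.1)).erase (root, x) with hU₂
    have hmem₁ : ∀ b, b ∈ U₁ ↔ (b ∈ U ∧ ReflTransGen rU x b.1) := by
      intro b; simp [hU₁]
    have hmem₂ : ∀ b, b ∈ U₂ ↔ (b ≠ (root, x) ∧ b ∈ U ∧ ¬ ReflTransGen rU x b.1) := by
      intro b; simp only [hU₂, Finset.mem_erase, Finset.mem_filter]
    have hrx1 : (root, x) ∉ U₁ := by
      rw [hmem₁]; rintro ⟨-, h⟩; exact hxnr h
    have hsub₁ : U₁ ⊆ U.erase (root, x) := by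
      intro b hb
      rw [Finset.mem_erase]
      rw [hmem₁] at hb
      refine ⟨?_, hb.1⟩
      rintro rfl
      exact hxnr hb.2
    have hsub₂ : U₂ ⊆ U.erase (root, x) := by
      intro b hb; rw [hmem₂] at hb; exact Finset.mem_erase.mpr ⟨hb.1, hb.2.1⟩
    have hcard_erase : (U.erase (root, x)).card ≤ n := by
      have h1 := Finset.card_erase_of_mem hx
      omega
    have hreach₁ : ∀ w, ReflTransGen rU x w → ReflTransGen (fun u v => (u, v) ∈ U₁) x w := by
      intro w hw
      induction hw with
      | refl => exact ReflTransGen.refl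
      | @tail b c h₁ h₂ ihw => exact ihw.tail ((hmem₁ (b, c)).mpr ⟨h₂, h₁⟩)
    have hroot₁ : ∀ u, (u, x) ∉ U₁ := by
      intro u hu
      rw [hmem₁] at hu
      have : u = root := hindeg u root x hu.1 hx
      subst this
      exact hxnr hu.2
    have hind₁ : ∀ u u' v, (u, v) ∈ U₁ → (u', v) ∈ U₁ → u = u' := fun u u' v h h' =>
      hindeg u u' v ((hmem₁ _).mp h).1 ((hmem₁ _).mp h').1
    have harc₁ : ∀ a ∈ U₁, ReflTransGen (fun u v => (u, v) ∈ U₁) x a.1 := fun a ha' =>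
      hreach₁ a.1 ((hmem₁ a).mp ha').2
    obtain ⟨l₁, h₁ne, h₁head, h₁last, h₁cov, h₁sum⟩ :=
      ih U₁ x (le_trans (Finset.card_le_card hsub₁) hcard_erase) hroot₁ harc₁ hind₁
    have hroot₂ : ∀ u, (u, root) ∉ U₂ := fun u hu => hroot u ((hmem₂ _).mp hu).2.1
    have hind₂ : ∀ u u' v, (u, v) ∈ U₂ → (u', v) ∈ U₂ → u = u' := fun u u' v h h' =>
      hindeg u u' v ((hmem₂ _).mp h).2.1 ((hmem₂ _).mp h').2.1
    have hreach₂ : ∀ w, ReflTransGen rU root w → ¬ ReflTransGen rU x w →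
        ReflTransGen (fun u v => (u, v) ∈ U₂) root w := by
      intro w hw
      induction hw with
      | refl => intro _; exact ReflTransGen.refl
      | @tail b c h₁ h₂ ihw =>
        intro hc
        have hb : ¬ ReflTransGen rU x b := fun h => hc (h.tail h₂)
        have hbc : (b, c) ∈ U₂ := by
          rw [hmem₂]
          refine ⟨?_, h₂, hb⟩
          intro heq
          have hcx : c = x := congrArg Prod.snd heq
          exact hc (by rw [hcx])
        exact (ihw hb).tail hbc
    have harc₂ : ∀ a ∈ U₂, ReflTransGen (fun u v => (u, v) ∈ U₂) root a.1 := by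
      intro a ha'
      have h := (hmem₂ a).mp ha'
      exact hreach₂ a.1 (hreach a h.2.1) h.2.2
    obtain ⟨l₂, h₂ne, h₂head, h₂last, h₂cov, h₂sum⟩ :=
      ih U₂ root (le_trans (Finset.card_le_card hsub₂) hcard_erase) hroot₂ harc₂ hind₂
    have hpart : ∀ b ∈ U, b = (root, x) ∨ b ∈ U₁ ∨ b ∈ U₂ := by
      intro b hb
      by_cases h : ReflTransGen rU x b.1
      · exact Or.inr (Or.inl ((hmem₁ b).mpr ⟨hb, h⟩))
      · by_cases he : b = (root, x)
        · exact Or.inl he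
        · exact Or.inr (Or.inr ((hmem₂ b).mpr ⟨he, hb, h⟩))
    have hlne : root :: (l₁ ++ l₂) ≠ [] := by simp
    refine ⟨root :: (l₁ ++ l₂), hlne, List.head_cons, ?_, ?_, ?_⟩
    · rw [List.getLast_cons (by simp [h₂ne] : l₁ ++ l₂ ≠ [])]
      rw [List.getLast_append_right h₂ne]
      exact h₂last
    · intro b hb
      have hx1 : x ∈ l₁ := by
        have := List.head_mem h₁ne
        rwa [h₁head] at this
      rcases hpart b hb with rfl | hb1 | hb2
      · constructor
        · simp
        · simp only [List.mem_cons, List.mem_append]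
          exact Or.inr (Or.inl hx1)
      · obtain ⟨c1, c2⟩ := h₁cov b hb1
        constructor <;> simp only [List.mem_cons, List.mem_append] <;> tauto
      · obtain ⟨c1, c2⟩ := h₂cov b hb2
        constructor <;> simp only [List.mem_cons, List.mem_append] <;> tauto
    · have hm₁ne : l₁.map μ ≠ [] := by simpa using h₁ne
      have hm₂ne : l₂.map μ ≠ [] := by simpa using h₂ne
      have hhead₁ : (l₁.map μ).head hm₁ne = μ x := by
        rw [List.head_map]; rw [h₁head]
      have hlast₁ : (l₁.map μ).getLast hm₁ne = μ x := by
        rw [List.getLast_map]; rw [h₁last]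
      have hhead₂ : (l₂.map μ).head hm₂ne = μ root := by
        rw [List.head_map]; rw [h₂head]
      have hchain : chainSum ((root :: (l₁ ++ l₂)).map μ)
          = dist (μ root) (μ x) + chainSum (l₁.map μ)
            + dist (μ x) (μ root) + chainSum (l₂.map μ) := by
        rw [List.map_cons, List.map_append,
          chainSum_cons_append (μ root) (l₁.map μ) hm₁ne (l₂.map μ) hm₂ne,
          hhead₁, hlast₁, hhead₂]
      have hdisj : Disjoint U₁ U₂ := by
        rw [Finset.disjoint_left]
        intro b hb₁ hb₂
        exact ((hmem₂ b).mp hb₂).2.2 ((hmem₁ b).mp hb₁).2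
      have hsums : dist (μ root) (μ x)
          + (∑ a ∈ U₁, dist (μ a.1) (μ a.2) + ∑ a ∈ U₂, dist (μ a.1) (μ a.2))
          ≤ ∑ a ∈ U, dist (μ a.1) (μ a.2) := by
        rw [← Finset.sum_union hdisj]
        have hsub : U₁ ∪ U₂ ⊆ U.erase (root, x) := Finset.union_subset hsub₁ hsub₂
        have h1 := Finset.sum_le_sum_of_subset_of_nonneg hsub
          (fun i _ _ => dist_nonneg (x := μ i.1) (y := μ i.2))
        have h2 := Finset.sum_erase_add U (fun a => dist (μ a.1) (μ a.2)) hx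
        simp only at h2
        linarith
      rw [hchain, dist_comm (μ x) (μ root)]
      linarith


lemma chainSum_eq (L : List M) :
    chainSum L = ∑ i : Fin (L.length - 1),
      dist (L.get ⟨i.val, by have := i.isLt; omega⟩) (L.get ⟨i.val + 1, by have := i.isLt; omega⟩) := by
  match L with
  | [] => simp
  | [a] => simp
  | a :: b :: t =>
    rw [chainSum_cons_cons, chainSum_eq (b :: t)]
    show _ = ∑ i : Fin (t.length + 1), _
    rw [Fin.sum_univ_succ]
    rfl

open SimpleGraph in
lemma pathTree_exists {V : Type*} [Fintype V] [DecidableEq V] (k : ℕ) (e : Fin (k + 1) ≃ V)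
    (w : Sym2 V → ℝ) :
    ∃ T : SimpleGraph V, T.IsTree ∧
      ∑ᶠ x ∈ T.edgeSet, w x = ∑ i : Fin k, w s(e i.castSucc, e i.succ) := by
  classical
  set G : SimpleGraph V := (pathGraph (k + 1)).comap e.symm.toEmbedding with hG
  have hadj : ∀ u v : V, G.Adj u v ↔
      ((e.symm u : ℕ) + 1 = (e.symm v : ℕ) ∨ (e.symm v : ℕ) + 1 = (e.symm u : ℕ)) := by
    intro u v
    rw [hG]
    exact pathGraph_adj
  have hidx_inj : ∀ u v : V, (e.symm u : ℕ) = (e.symm v : ℕ) → u = v := by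
    intro u v h
    have : e.symm u = e.symm v := Fin.ext h
    exact e.symm.injective this
  -- connectivity
  have hconn : G.Connected := by
    have φ : G ≃g pathGraph (k + 1) := SimpleGraph.Iso.comap e.symm (pathGraph (k + 1))
    exact (pathGraph_connected k).map φ.symm.toHom φ.symm.toEquiv.surjective
  -- acyclicity
  have haux : ∀ u v : V, (e.symm u : ℕ) + 1 = (e.symm v : ℕ) →
      ¬ (G \ fromEdgeSet {s(u, v)}).Reachable u v := by
    intro u v huv ⟨p⟩
    obtain ⟨d, -, hd1, hd2⟩ := p.exists_boundary_dart {w : V | (e.symm w : ℕ) ≤ (e.symm u : ℕ)}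
      (by simp) (by simp [Set.mem_setOf_eq]; omega)
    have hda := d.adj
    rw [SimpleGraph.sdiff_adj] at hda
    obtain ⟨hGd, hne⟩ := hda
    have hne' : s(d.toProd.1, d.toProd.2) ≠ s(u, v) := by
      intro h
      exact hne (by rw [SimpleGraph.fromEdgeSet_adj]; exact ⟨by simp [h], hGd.ne⟩)
    simp only [Set.mem_setOf_eq, not_le] at hd1 hd2
    rcases (hadj _ _).mp hGd with h | h
    · have h1 : (e.symm d.toProd.1 : ℕ) = (e.symm u : ℕ) := by omega
      have h2 : (e.symm d.toProd.2 : ℕ) = (e.symm v : ℕ) := by omega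
      exact hne' (by rw [hidx_inj _ _ h1, hidx_inj _ _ h2])
    · omega
  have hacy : G.IsAcyclic := by
    rw [SimpleGraph.isAcyclic_iff_forall_adj_isBridge]
    intro u v huv
    rw [SimpleGraph.isBridge_iff]
    rcases (hadj _ _).mp huv with h | h
    · exact haux u v h
    · intro hr
      rw [Sym2.eq_swap] at hr
      exact haux v u h hr.symm
  -- edge set as range
  set F : Fin k → Sym2 V := fun i => s(e i.castSucc, e i.succ) with hF
  have hFinj : Function.Injective F := by
    intro i j hij
    rw [hF, Sym2.eq_iff] at hij
    rcases hij with ⟨h1, h2⟩ | ⟨h1, h2⟩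
    · exact Fin.castSucc_injective k (e.injective h1)
    · have c1 : (i.castSucc : ℕ) = (j.succ : ℕ) := congrArg Fin.val (e.injective h1)
      have c2 : (i.succ : ℕ) = (j.castSucc : ℕ) := congrArg Fin.val (e.injective h2)
      simp [Fin.val_succ] at c1 c2
      omega
  have hrange : G.edgeSet = Set.range F := by
    ext x
    induction x with
    | _ a b =>
      rw [SimpleGraph.mem_edgeSet, hadj]
      constructor
      · rintro (h | h)
        · have hlt : (e.symm a : ℕ) < k := by have := (e.symm b).isLt; omega
          refine ⟨⟨(e.symm a : ℕ), hlt⟩, ?_⟩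
          rw [hF]
          have h1 : (⟨(e.symm a : ℕ), hlt⟩ : Fin k).castSucc = e.symm a := Fin.ext (by simp)
          have h2 : (⟨(e.symm a : ℕ), hlt⟩ : Fin k).succ = e.symm b := Fin.ext (by simp [Fin.val_succ]; omega)
          simp only [h1, h2, Equiv.apply_symm_apply]
        · have hlt : (e.symm b : ℕ) < k := by have := (e.symm a).isLt; omega
          refine ⟨⟨(e.symm b : ℕ), hlt⟩, ?_⟩
          rw [hF]
          have h1 : (⟨(e.symm b : ℕ), hlt⟩ : Fin k).castSucc = e.symm b := Fin.ext (by simp)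
          have h2 : (⟨(e.symm b : ℕ), hlt⟩ : Fin k).succ = e.symm a := Fin.ext (by simp [Fin.val_succ]; omega)
          simp only [h1, h2, Equiv.apply_symm_apply]
          rw [Sym2.eq_swap]
      · rintro ⟨i, hi⟩
        rw [hF] at hi
        have := Sym2.eq_iff.mp hi.symm
        rcases this with ⟨h1, h2⟩ | ⟨h1, h2⟩
        · subst h1; subst h2
          left
          simp
        · subst h1; subst h2
          right
          simp
  refine ⟨G, ⟨hconn, hacy⟩, ?_⟩
  rw [hrange, finsum_mem_range hFinj, finsum_eq_sum_of_fintype]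

lemma exists_spanning_path_tree {V : Type*} [Fintype V] [DecidableEq V] (f : V → M)
    (d : List V) (nd : d.Nodup) (hall : ∀ x, x ∈ d) (hne : d ≠ []) :
    ∃ T : SimpleGraph V, T.IsTree ∧
      ∑ᶠ x ∈ T.edgeSet,
        (Sym2.lift ⟨fun u v => dist (f u) (f v), fun u v => dist_comm _ _⟩ : Sym2 V → ℝ) x
        = chainSum (d.map f) := by
  obtain ⟨k, hk⟩ : ∃ k, d.length = k + 1 := by
    cases d with
    | nil => exact absurd rfl hne
    | cons a t => exact ⟨t.length, rfl⟩
  set e0 := List.Nodup.getEquivOfForallMemList d nd hall with he0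
  set e : Fin (k + 1) ≃ V := (finCongr hk.symm).trans e0 with he
  obtain ⟨T, hT, hsum⟩ := pathTree_exists k e
    (Sym2.lift ⟨fun u v => dist (f u) (f v), fun u v => dist_comm _ _⟩)
  refine ⟨T, hT, ?_⟩
  rw [hsum, chainSum_eq (d.map f)]
  have hlen : k = (d.map f).length - 1 := by simp [hk]
  refine Fintype.sum_equiv (finCongr hlen) _ _ ?_
  intro i
  simp only [Sym2.lift_mk, he, he0, Equiv.trans_apply, finCongr_apply,
    List.Nodup.getEquivOfForallMemList_apply, List.get_eq_getElem, List.getElem_map,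
    Fin.coe_cast, Fin.coe_castSucc, Fin.val_succ]

end ChainSum



/-- A vehicle-routing instance: a finite set `P` of items, a root `r ∉ P`,
a placement `μ₀` of root and items in a metric space `M`, a delivery time
`δ ≥ 1`, and a deadline `Δ > 0`. -/
structure VRInstance (α M : Type*) [MetricSpace M] where
  P : Finset α
  r : α
  r_not_item : r ∉ P
  P_nonempty : P.Nonempty
  μ₀ : α → M
  δ : ℝ
  one_le_δ : 1 ≤ δ
  Δ : ℝ
  Δ_pos : 0 < Δ

variable {α M : Type*} [MetricSpace M]

/-- A schedule: a finite arborescence `(W, A)` rooted at `I.r` with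
`{r} ∪ P ⊆ W`, out-degree at most 2 everywhere, out-degree at most 1 on items,
together with a placement `μ : W → M` extending `μ₀` on `{r} ∪ P`. -/
structure Schedule {α M : Type*} [MetricSpace M] (I : VRInstance α M) where
  W : Set α
  A : Set (α × α)
  μ : α → M
  finite_W : W.Finite
  root_mem : I.r ∈ W
  items_subset : ↑I.P ⊆ W
  arcs_subset : ∀ a ∈ A, a.1 ∈ W ∧ a.2 ∈ W
  no_arc_into_root : ∀ u, (u, I.r) ∉ A
  unique_in_arc : ∀ v ∈ W, v ≠ I.r → ∃! u, (u, v) ∈ A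
  reachable : ∀ v ∈ W, Relation.ReflTransGen (fun u w => (u, w) ∈ A) I.r v
  outdeg_le_two : ∀ v ∈ W, {x | (v, x) ∈ A}.ncard ≤ 2
  items_outdeg_le_one : ∀ p ∈ I.P, {x | (p, x) ∈ A}.ncard ≤ 1
  μ_placement : ∀ v ∈ insert I.r (↑I.P : Set α), μ v = I.μ₀ v

namespace Schedule

variable {I : VRInstance α M} (S : Schedule I)

/-- Reachability along arcs of the schedule. -/
def reach (u v : α) : Prop := Relation.ReflTransGen (fun a b => (a, b) ∈ S.A) u v

/-- `W_{x*}`: the vertex set of the maximal subarborescence rooted at `x`. -/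
def desc (x : α) : Set α := {y ∈ S.W | S.reach x y}

/-- `W_{ry}`: the vertex set of the directed `r`–`y` path. -/
def pathSet (y : α) : Set α := {u ∈ S.W | S.reach I.r u ∧ S.reach u y}

/-- The arcs on the directed `r`–`y` path. -/
def pathArcs (y : α) : Set (α × α) :=
  {a ∈ S.A | a.1 ∈ S.pathSet y ∧ a.2 ∈ S.pathSet y}

/-- Out-degree of a vertex. -/
noncomputable def outDeg (v : α) : ℕ := {x | (v, x) ∈ S.A}.ncard

/-- The handover delay at a bifurcation node `w`:
`min_{x child of w} |P ∩ W_{x*}|`. -/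
noncomputable def handover (w : α) : ℕ :=
  sInf {k : ℕ | ∃ x, (w, x) ∈ S.A ∧ k = ((↑I.P : Set α) ∩ S.desc x).ncard}

/-- The delay of vertex `y`: travel time along the `r`–`y` path, plus delivery
time `δ` for each item on the path, plus handover delays at bifurcation nodes
on the path. -/
noncomputable def delayTo (y : α) : ℝ :=
  (∑ᶠ a ∈ S.pathArcs y, dist (S.μ a.1) (S.μ a.2))
    + I.δ * ((↑I.P : Set α) ∩ S.pathSet y).ncard
    + ∑ᶠ w ∈ {u ∈ S.pathSet y | S.outDeg u = 2}, (S.handover w : ℝ)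

/-- The delay of the schedule: the maximum delay of an item. -/
noncomputable def delay : ℝ := I.P.sup' I.P_nonempty fun p => S.delayTo p

/-- A schedule is feasible if its delay is at most the deadline. -/
def Feasible : Prop := S.delay ≤ I.Δ

/-- The length (travel cost) of the schedule. -/
noncomputable def length : ℝ := ∑ᶠ a ∈ S.A, dist (S.μ a.1) (S.μ a.2)

/-- The leaves of the schedule (one vehicle per leaf). -/
def leaves : Set α := {v ∈ S.W | S.outDeg v = 0}

/-- The cost of the schedule for setup cost `σ`: length plus `σ` per vehicle. -/
noncomputable def cost (σ : ℝ) : ℝ := S.length + σ * S.leaves.ncard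

end Schedule


lemma sum_biUnion_le_sum {β γ : Type*} [DecidableEq γ] (s : Finset β) (t : β → Finset γ)
    (f : γ → ℝ) (hf : ∀ x, 0 ≤ f x) :
    ∑ x ∈ s.biUnion t, f x ≤ ∑ b ∈ s, ∑ x ∈ t b, f x := by
  classical
  induction s using Finset.induction with
  | empty => simp
  | @insert a s ha ih =>
    rw [Finset.biUnion_insert, Finset.sum_insert ha]
    have h1 := Finset.sum_union_inter (s₁ := t a) (s₂ := s.biUnion t) (f := f)
    have h2 : 0 ≤ ∑ x ∈ t a ∩ s.biUnion t, f x := Finset.sum_nonneg (fun i _ => hf i)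
    linarith

namespace Schedule

variable {I : VRInstance α M} (S : Schedule I)

lemma finite_A : S.A.Finite :=
  (S.finite_W.prod S.finite_W).subset
    (fun a ha => Set.mem_prod.mpr ⟨(S.arcs_subset a ha).1, (S.arcs_subset a ha).2⟩)

lemma in_arc_unique {u u' v : α} (h : (u, v) ∈ S.A) (h' : (u', v) ∈ S.A) : u = u' := by
  have hvW : v ∈ S.W := (S.arcs_subset _ h).2
  have hvr : v ≠ I.r := fun hh => S.no_arc_into_root u (hh ▸ h)
  obtain ⟨u0, -, huniq⟩ := S.unique_in_arc v hvW hvr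
  exact (huniq u h).trans (huniq u' h').symm

lemma no_cycle {v : α} (hv : S.reach I.r v) :
    ¬ Relation.TransGen (fun a b => (a, b) ∈ S.A) v v := by
  intro hcyc
  set R : α → α → Prop := fun a b => (a, b) ∈ S.A with hR
  set C : Set α := {w | Relation.ReflTransGen R v w ∧ Relation.ReflTransGen R w v} with hC
  have hvC : v ∈ C := ⟨Relation.ReflTransGen.refl, Relation.ReflTransGen.refl⟩
  have hin : ∀ w ∈ C, ∃ u ∈ C, R u w := by
    intro w hw
    have hww : Relation.TransGen R w w :=
      (Relation.TransGen.trans_right hw.2 hcyc).trans_left hw.1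
    obtain ⟨u, hwu, huw⟩ := Relation.TransGen.tail'_iff.mp hww
    exact ⟨u, ⟨hw.1.trans hwu, Relation.ReflTransGen.head huw hw.2⟩, huw⟩
  have hrC : I.r ∉ C := by
    intro hr
    obtain ⟨u, -, hu⟩ := hin I.r hr
    exact S.no_arc_into_root u hu
  have hmain : ∀ w, Relation.ReflTransGen R I.r w → w ∉ C := by
    intro w hw
    induction hw with
    | refl => exact hrC
    | @tail b c hb harc ih =>
      intro hc
      obtain ⟨u, huC, hu⟩ := hin c hc
      have h1 : b = u := S.in_arc_unique harc hu
      exact ih (by rwa [h1])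
  exact hmain v hv hvC

lemma reach_antisymm {u v : α} (hu : u ∈ S.W) (h1 : S.reach u v) (h2 : S.reach v u) :
    u = v := by
  by_contra hne
  rcases h1.cases_head with h | ⟨c, hc, hcv⟩
  · exact hne h
  · exact S.no_cycle (S.reachable u hu)
      ((Relation.TransGen.head' hc hcv).trans_left h2)

lemma reach_comparable {u u' z : α} (h : S.reach u z) (h' : S.reach u' z) :
    S.reach u u' ∨ S.reach u' u := by
  revert h
  induction h' with
  | refl => intro h; exact Or.inl h
  | @tail b c hb harc ih =>
    intro h
    rcases h.cases_tail with rfl | ⟨w', hw', harc'⟩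
    · exact Or.inr (hb.tail harc)
    · have hwb : w' = b := S.in_arc_unique harc' harc
      exact ih (by rwa [hwb] at hw')

lemma exists_max_item : ∀ (n : ℕ) (p : α), p ∈ I.P →
    ({x ∈ (↑I.P : Set α) | S.reach p x}).ncard ≤ n →
    ∃ q ∈ I.P, S.reach p q ∧ ∀ p' ∈ I.P, S.reach q p' → p' = q := by
  intro n
  induction n with
  | zero =>
    intro p hp hcard
    exfalso
    have hfin : ({x ∈ (↑I.P : Set α) | S.reach p x}).Finite :=
      I.P.finite_toSet.subset (fun x hx => hx.1)
    have hpos : 0 < ({x ∈ (↑I.P : Set α) | S.reach p x}).ncard :=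
      (Set.ncard_pos hfin).mpr ⟨p, hp, Relation.ReflTransGen.refl⟩
    omega
  | succ n ih =>
    intro p hp hcard
    by_cases hQ : ∀ p' ∈ I.P, S.reach p p' → p' = p
    · exact ⟨p, hp, Relation.ReflTransGen.refl, hQ⟩
    · push_neg at hQ
      obtain ⟨p', hp', hpp', hne⟩ := hQ
      have hfinp : ({x ∈ (↑I.P : Set α) | S.reach p x}).Finite :=
        I.P.finite_toSet.subset (fun x hx => hx.1)
      have hnotin : p ∉ {x ∈ (↑I.P : Set α) | S.reach p' x} := by
        intro hx
        exact hne (S.reach_antisymm (S.items_subset hp') hx.2 hpp')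
      have hss : {x ∈ (↑I.P : Set α) | S.reach p' x} ⊂ {x ∈ (↑I.P : Set α) | S.reach p x} := by
        rw [Set.ssubset_def]
        constructor
        · intro x hx; exact ⟨hx.1, hpp'.trans hx.2⟩
        · intro hsub
          exact hnotin (hsub ⟨hp, Relation.ReflTransGen.refl⟩)
      have hlt := Set.ncard_lt_ncard hss hfinp
      obtain ⟨q, hq, hq2, hq3⟩ := ih p' hp' (by omega)
      exact ⟨q, hq, hpp'.trans hq2, hq3⟩

lemma exists_leaf : ∀ (n : ℕ) (v : α), v ∈ S.W → (S.desc v).ncard ≤ n →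
    ∃ x, x ∈ S.leaves ∧ S.reach v x := by
  intro n
  induction n with
  | zero =>
    intro v hv hcard
    exfalso
    have hfin : (S.desc v).Finite := S.finite_W.subset (fun y hy => hy.1)
    have hpos : 0 < (S.desc v).ncard :=
      (Set.ncard_pos hfin).mpr ⟨v, hv, Relation.ReflTransGen.refl⟩
    omega
  | succ n ih =>
    intro v hv hcard
    by_cases h0 : S.outDeg v = 0
    · exact ⟨v, ⟨hv, h0⟩, Relation.ReflTransGen.refl⟩
    · obtain ⟨x, hx⟩ : ∃ x, (v, x) ∈ S.A := by
        obtain ⟨x, hx⟩ := Set.nonempty_of_ncard_ne_zero h0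
        exact ⟨x, hx⟩
      have hxW : x ∈ S.W := (S.arcs_subset _ hx).2
      have hvx : S.reach v x := Relation.ReflTransGen.single hx
      have hfinv : (S.desc v).Finite := S.finite_W.subset (fun y hy => hy.1)
      have hnotin : v ∉ S.desc x := by
        intro hy
        have hveq : v = x := S.reach_antisymm hv hvx hy.2
        subst hveq
        exact S.no_cycle (S.reachable v hv) (Relation.TransGen.single hx)
      have hss : S.desc x ⊂ S.desc v := by
        rw [Set.ssubset_def]
        constructor
        · intro y hy; exact ⟨hy.1, hvx.trans hy.2⟩
        · intro hsub
          exact hnotin (hsub ⟨hv, Relation.ReflTransGen.refl⟩)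
      have hlt := Set.ncard_lt_ncard hss hfinv
      obtain ⟨y, hy1, hy2⟩ := ih x hxW (by omega)
      exact ⟨y, hy1, hvx.trans hy2⟩

end Schedule

/-- The minimum length of a tree with vertex set `{r} ∪ P`,
with edges weighted by the metric distance. -/
noncomputable def mstLength [DecidableEq α] (I : VRInstance α M) : ℝ :=
  sInf {x : ℝ | ∃ T : SimpleGraph ↥(insert I.r I.P), T.IsTree ∧
    x = ∑ᶠ e ∈ T.edgeSet,
      (Sym2.lift ⟨fun u v => dist (I.μ₀ u) (I.μ₀ v), fun u v => dist_comm _ _⟩ : Sym2 ↥(insert I.r I.P) → ℝ) e}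

/-- **Lower bound.** Every feasible schedule has length at least `MST/2` and
uses at least `(MST/2 + n·δ)/Δ` vehicles. -/
theorem feasible_schedule_lower_bound [DecidableEq α] (I : VRInstance α M)
    (S : Schedule I) (hS : S.Feasible) :
    mstLength I / 2 ≤ S.length ∧
    (mstLength I / 2 + I.P.card * I.δ) / I.Δ ≤ (S.leaves.ncard : ℝ) := by
  classical
  have hA : S.A.Finite := S.finite_A
  set FA : Finset (α × α) := hA.toFinset with hFA
  have hFAmem : ∀ a, a ∈ FA ↔ a ∈ S.A := fun a => hA.mem_toFinset
  set U : Finset (α × α) := FA.filter (fun a => ∃ p ∈ I.P, S.reach a.2 p) with hU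
  have hUmem : ∀ a, a ∈ U ↔ (a ∈ S.A ∧ ∃ p ∈ I.P, S.reach a.2 p) := by
    intro a; rw [hU, Finset.mem_filter, hFAmem]
  have hUroot : ∀ u, (u, I.r) ∉ U := fun u hu => S.no_arc_into_root u ((hUmem _).mp hu).1
  have hUindeg : ∀ u u' v, (u, v) ∈ U → (u', v) ∈ U → u = u' := fun u u' v h h' =>
    S.in_arc_unique ((hUmem _).mp h).1 ((hUmem _).mp h').1
  have hUreach0 : ∀ (p : α), p ∈ I.P → ∀ (v : α),
      Relation.ReflTransGen (fun a b => (a, b) ∈ S.A) I.r v →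
      S.reach v p → Relation.ReflTransGen (fun u w => (u, w) ∈ U) I.r v := by
    intro p hp v hv
    induction hv with
    | refl => intro _; exact Relation.ReflTransGen.refl
    | @tail b c hb harc ih =>
      intro hcp
      have hbp : S.reach b p := Relation.ReflTransGen.head harc hcp
      exact (ih hbp).tail ((hUmem (b, c)).mpr ⟨harc, p, hp, hcp⟩)
  have hUreach : ∀ a ∈ U, Relation.ReflTransGen (fun u w => (u, w) ∈ U) I.r a.1 := by
    intro a ha
    obtain ⟨haA, p, hp, hreach⟩ := (hUmem a).mp ha
    exact hUreach0 p hp a.1 (S.reachable a.1 (S.arcs_subset a haA).1)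
      (Relation.ReflTransGen.head haA hreach)
  obtain ⟨l, hlne, hlhead, hllast, hlcov, hlsum⟩ :=
    exists_walk S.μ U.card U I.r le_rfl hUroot hUreach hUindeg
  have hrl : I.r ∈ l := hlhead ▸ List.head_mem hlne
  have hPl : ∀ p ∈ I.P, p ∈ l := by
    intro p hp
    have hpW : p ∈ S.W := S.items_subset hp
    have hpr : p ≠ I.r := fun h => I.r_not_item (h ▸ hp)
    rcases (S.reachable p hpW).cases_tail with h | ⟨u, -, harc⟩
    · exact absurd h hpr
    · exact (hlcov (u, p) ((hUmem _).mpr ⟨harc, p, hp, Relation.ReflTransGen.refl⟩)).2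
  set s : Finset α := insert I.r I.P with hs
  have hsl : ∀ x ∈ s, x ∈ l := by
    intro x hx
    rcases Finset.mem_insert.mp hx with rfl | hx
    · exact hrl
    · exact hPl x hx
  set d : List α := (l.filter (fun x => x ∈ s)).dedup with hd
  have hd_sub : d.Sublist l := (List.dedup_sublist _).trans List.filter_sublist
  have hd_nodup : d.Nodup := List.nodup_dedup _
  have hd_mem : ∀ x, x ∈ d ↔ x ∈ s := by
    intro x
    rw [hd, List.mem_dedup, List.mem_filter]
    simp only [decide_eq_true_eq]
    exact ⟨fun h => h.2, fun h => ⟨hsl x h, h⟩⟩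
  have hd_ne : d ≠ [] := by
    intro h
    have := (hd_mem I.r).mpr (Finset.mem_insert_self _ _)
    rw [h] at this
    exact List.not_mem_nil this
  have hmap_eq : d.map S.μ = d.map I.μ₀ := by
    apply List.map_congr_left
    intro x hx
    apply S.μ_placement
    have := (hd_mem x).mp hx
    rw [hs] at this
    simpa using this
  have hchain1 : chainSum (d.map S.μ) ≤ chainSum (l.map S.μ) :=
    (chainSum_sublist (hd_sub.map S.μ)).1
  have hd_mem' : ∀ x ∈ d, x ∈ s := fun x hx => (hd_mem x).mp hx
  set d' : List ↥s := d.attachWith (fun x => x ∈ s) hd_mem' with hd'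
  have hd'_val : d'.map Subtype.val = d := by
    simp [hd']
  have hd'_nodup : d'.Nodup := by
    apply List.Nodup.of_map Subtype.val
    rwa [hd'_val]
  have hd'_all : ∀ x : ↥s, x ∈ d' := by
    intro x
    rw [hd', List.attachWith, List.mem_pmap]
    exact ⟨x.val, (hd_mem x.val).mpr x.property, rfl⟩
  have hd'_ne : d' ≠ [] := by
    intro h
    apply hd_ne
    rw [← hd'_val, h, List.map_nil]
  have hd'_map : d'.map (fun x => I.μ₀ x.val) = d.map I.μ₀ := by
    rw [← hd'_val, List.map_map]
    rfl
  obtain ⟨T, hT, hTsum⟩ :=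
    exists_spanning_path_tree (fun x : ↥s => I.μ₀ x.val) d' hd'_nodup hd'_all hd'_ne
  have hbdd : BddBelow {x : ℝ | ∃ T : SimpleGraph ↥(insert I.r I.P), T.IsTree ∧
      x = ∑ᶠ e ∈ T.edgeSet,
        (Sym2.lift ⟨fun u v => dist (I.μ₀ u) (I.μ₀ v), fun u v => dist_comm _ _⟩ :
          Sym2 ↥(insert I.r I.P) → ℝ) e} := by
    refine ⟨0, fun x hx => ?_⟩
    obtain ⟨T', hT', rfl⟩ := hx
    rw [finsum_mem_eq_sum _ (Set.toFinite _)]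
    apply Finset.sum_nonneg
    intro e _
    induction e with
    | _ a b => rw [Sym2.lift_mk]; exact dist_nonneg
  have hmst_le : mstLength I ≤ chainSum (d.map I.μ₀) := by
    rw [mstLength]
    apply csInf_le hbdd
    refine ⟨T, hT, ?_⟩
    rw [hTsum, hd'_map]
  have hUsub : U ⊆ FA := Finset.filter_subset _ _
  have hsum_UA : ∑ a ∈ U, dist (S.μ a.1) (S.μ a.2) ≤ ∑ a ∈ FA, dist (S.μ a.1) (S.μ a.2) :=
    Finset.sum_le_sum_of_subset_of_nonneg hUsub (fun i _ _ => dist_nonneg)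
  have hlen : S.length = ∑ a ∈ FA, dist (S.μ a.1) (S.μ a.2) := by
    rw [Schedule.length, show S.A = (↑FA : Set (α × α)) from (hA.coe_toFinset).symm,
      finsum_mem_coe_finset]
  have hmst2 : mstLength I ≤ 2 * ∑ a ∈ U, dist (S.μ a.1) (S.μ a.2) := by
    calc mstLength I ≤ chainSum (d.map I.μ₀) := hmst_le
      _ = chainSum (d.map S.μ) := by rw [hmap_eq]
      _ ≤ chainSum (l.map S.μ) := hchain1
      _ ≤ _ := hlsum
  have part1 : mstLength I / 2 ≤ S.length := by
    rw [hlen]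
    linarith
  refine ⟨part1, ?_⟩
  -- Part 2
  set Q : Finset α := I.P.filter (fun q => ∀ p' ∈ I.P, S.reach q p' → p' = q) with hQ
  have hQmem : ∀ q, q ∈ Q ↔ q ∈ I.P ∧ ∀ p' ∈ I.P, S.reach q p' → p' = q := by
    intro q; rw [hQ, Finset.mem_filter]
  have hQmax : ∀ p ∈ I.P, ∃ q ∈ Q, S.reach p q := by
    intro p hp
    obtain ⟨q, hq, hpq, hmax⟩ :=
      S.exists_max_item ({x ∈ (↑I.P : Set α) | S.reach p x}).ncard p hp le_rfl
    exact ⟨q, (hQmem q).mpr ⟨hq, hmax⟩, hpq⟩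
  have hLfin : S.leaves.Finite := S.finite_W.subset (fun v hv => hv.1)
  set lf : α → α := fun q =>
    if h : ∃ x, x ∈ S.leaves ∧ S.reach q x then h.choose else q with hlf
  have hlf_spec : ∀ q ∈ Q, lf q ∈ S.leaves ∧ S.reach q (lf q) := by
    intro q hq
    have hqW : q ∈ S.W := S.items_subset ((hQmem q).mp hq).1
    have hex : ∃ x, x ∈ S.leaves ∧ S.reach q x :=
      S.exists_leaf (S.desc q).ncard q hqW le_rfl
    rw [hlf]
    simp only [dif_pos hex]
    exact hex.choose_spec
  have hQcard : Q.card ≤ hLfin.toFinset.card := by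
    apply Finset.card_le_card_of_injOn lf
    · intro q hq
      rw [Finset.mem_coe, Set.Finite.mem_toFinset]
      exact (hlf_spec q hq).1
    · intro q hq q' hq' heq
      rw [Finset.mem_coe] at hq hq'
      have hl1 := hlf_spec q hq
      have hl2 := hlf_spec q' hq'
      have hr2 : S.reach q' (lf q) := heq ▸ hl2.2
      rcases S.reach_comparable hl1.2 hr2 with h | h
      · exact (((hQmem q).mp hq).2 q' ((hQmem q').mp hq').1 h).symm
      · exact ((hQmem q').mp hq').2 q ((hQmem q).mp hq).1 h
  have hΔq : ∀ q ∈ Q, S.delayTo q ≤ I.Δ := fun q hq =>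
    (Finset.le_sup' (fun p => S.delayTo p) ((hQmem q).mp hq).1).trans hS
  set PAq : α → Finset (α × α) :=
    fun q => FA.filter (fun a => a.1 ∈ S.pathSet q ∧ a.2 ∈ S.pathSet q) with hPAq
  have hPA_coe : ∀ q : α, S.pathArcs q = ↑(PAq q) := by
    intro q
    ext a
    rw [hPAq]
    simp only [Schedule.pathArcs, Set.mem_setOf_eq, Finset.coe_filter, hFAmem]
  set cnt : α → ℕ := fun q => (I.P.filter (fun p => p ∈ S.pathSet q)).card with hcntdef
  have hcnt : ∀ q : α, ((↑I.P : Set α) ∩ S.pathSet q).ncard = cnt q := by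
    intro q
    rw [hcntdef]
    rw [show (↑I.P : Set α) ∩ S.pathSet q
        = ↑(I.P.filter (fun p => p ∈ S.pathSet q)) from ?_, Set.ncard_coe_finset]
    ext p
    simp [Set.mem_inter_iff]
  have hdelay_ge : ∀ q : α,
      (∑ a ∈ PAq q, dist (S.μ a.1) (S.μ a.2)) + I.δ * cnt q ≤ S.delayTo q := by
    intro q
    rw [Schedule.delayTo]
    have h1 : ∑ᶠ a ∈ S.pathArcs q, dist (S.μ a.1) (S.μ a.2)
        = ∑ a ∈ PAq q, dist (S.μ a.1) (S.μ a.2) := by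
      rw [hPA_coe q, finsum_mem_coe_finset]
    have hfin3 : ({u ∈ S.pathSet q | S.outDeg u = 2}
        ∩ Function.support (fun w => (S.handover w : ℝ))).Finite :=
      (S.finite_W.subset (fun u hu => hu.1.1)).inter_of_left _
    have h3 : 0 ≤ ∑ᶠ w ∈ {u ∈ S.pathSet q | S.outDeg u = 2}, (S.handover w : ℝ) := by
      rw [finsum_mem_eq_sum _ hfin3]
      exact Finset.sum_nonneg (fun i _ => Nat.cast_nonneg _)
    rw [h1, hcnt q]
    linarith
  have hUcover : U ⊆ Q.biUnion PAq := by
    intro a ha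
    obtain ⟨haA, p, hp, hap⟩ := (hUmem a).mp ha
    obtain ⟨q, hqQ, hpq⟩ := hQmax p hp
    have haq : S.reach a.2 q := hap.trans hpq
    refine Finset.mem_biUnion.mpr ⟨q, hqQ, ?_⟩
    rw [hPAq]
    refine Finset.mem_filter.mpr ⟨(hFAmem a).mpr haA, ?_, ?_⟩
    · exact ⟨(S.arcs_subset a haA).1, S.reachable _ (S.arcs_subset a haA).1,
        Relation.ReflTransGen.head haA haq⟩
    · exact ⟨(S.arcs_subset a haA).2, S.reachable _ (S.arcs_subset a haA).2, haq⟩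
  have hPcover : I.P ⊆ Q.biUnion (fun q => I.P.filter (fun p => p ∈ S.pathSet q)) := by
    intro p hp
    obtain ⟨q, hqQ, hpq⟩ := hQmax p hp
    refine Finset.mem_biUnion.mpr ⟨q, hqQ, Finset.mem_filter.mpr ⟨hp, ?_⟩⟩
    exact ⟨S.items_subset hp, S.reachable p (S.items_subset hp), hpq⟩
  have hsum1 : ∑ a ∈ U, dist (S.μ a.1) (S.μ a.2)
      ≤ ∑ q ∈ Q, ∑ a ∈ PAq q, dist (S.μ a.1) (S.μ a.2) := by
    calc ∑ a ∈ U, dist (S.μ a.1) (S.μ a.2)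
        ≤ ∑ a ∈ Q.biUnion PAq, dist (S.μ a.1) (S.μ a.2) :=
          Finset.sum_le_sum_of_subset_of_nonneg hUcover (fun i _ _ => dist_nonneg)
      _ ≤ _ := sum_biUnion_le_sum Q PAq _ (fun x => dist_nonneg)
  have hsum2 : (I.P.card : ℝ) ≤ ∑ q ∈ Q, (cnt q : ℝ) := by
    have h1 := (Finset.card_le_card hPcover).trans Finset.card_biUnion_le
    rw [hcntdef]
    exact_mod_cast h1
  have hQsum : ∑ q ∈ Q, S.delayTo q ≤ (Q.card : ℝ) * I.Δ := by
    calc ∑ q ∈ Q, S.delayTo q ≤ ∑ _q ∈ Q, I.Δ := Finset.sum_le_sum hΔq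
      _ = Q.card * I.Δ := by rw [Finset.sum_const, nsmul_eq_mul]
  have hlow : ∑ a ∈ U, dist (S.μ a.1) (S.μ a.2) + I.δ * I.P.card
      ≤ ∑ q ∈ Q, S.delayTo q := by
    have h1 : ∑ q ∈ Q, ((∑ a ∈ PAq q, dist (S.μ a.1) (S.μ a.2)) + I.δ * cnt q)
        ≤ ∑ q ∈ Q, S.delayTo q := Finset.sum_le_sum (fun q _ => hdelay_ge q)
    rw [Finset.sum_add_distrib, ← Finset.mul_sum] at h1
    have hδ0 : (0 : ℝ) ≤ I.δ := le_trans zero_le_one I.one_le_δ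
    have h2 : I.δ * (I.P.card : ℝ) ≤ I.δ * ∑ q ∈ Q, (cnt q : ℝ) :=
      mul_le_mul_of_nonneg_left hsum2 hδ0
    linarith
  have hfinal : mstLength I / 2 + (I.P.card : ℝ) * I.δ ≤ (Q.card : ℝ) * I.Δ := by
    have := hlow.trans hQsum
    linarith
  rw [div_le_iff₀ I.Δ_pos]
  have hcards : (Q.card : ℝ) ≤ (S.leaves.ncard : ℝ) := by
    rw [Set.ncard_eq_toFinset_card _ hLfin]
    exact_mod_cast hQcard
  have := mul_le_mul_of_nonneg_right hcards I.Δ_pos.le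
  linarith
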